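/- Let a ∈ (0,1), let p be an odd positive integer, let t > 0 and define μ(t,ζ) := t^a + Σ_{ℓ=1}^p (π(a−ℓ)/ℓ!) ζ^ℓ t^{a−ℓ}. Then the function ζ ↦ μ(t,ζ) is concave on the interval [−t, 0]. -/

import Mathlib

open scoped BigOperators

/-- `pifun a j` is `π(a−j) := a ∏_{i=1}^{j−1}(a−i)`. -/
noncomputable def pifun (a : ℝ) (j : ℕ) : ℝ := a * ∏ i ∈ Finset.Icc 1 (j - 1), (a - (i : ℝ))

/-- `mufun a p t ζ` is the degree-p Taylor polynomial in ζ of `(t+ζ)^a` around `ζ = 0`. -/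
noncomputable def mufun (a : ℝ) (p : ℕ) (t ζ : ℝ) : ℝ :=
  t ^ a + ∑ ℓ ∈ Finset.Icc 1 p, pifun a ℓ / (Nat.factorial ℓ : ℝ) * ζ ^ ℓ * t ^ (a - (ℓ : ℝ))

lemma pifun_eq (a : ℝ) (n : ℕ) :
    pifun a n = (-1) ^ (n - 1) * (a * ∏ i ∈ Finset.Icc 1 (n - 1), ((i : ℝ) - a)) := by
  unfold pifun
  rw [show ∀ P : ℝ, a * P = a * P from fun _ => rfl]
  have : ∏ i ∈ Finset.Icc 1 (n - 1), (a - (i : ℝ))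
      = ∏ i ∈ Finset.Icc 1 (n - 1), ((-1) * ((i : ℝ) - a)) := by
    apply Finset.prod_congr rfl; intro i _; ring
  rw [this, Finset.prod_mul_distrib, Finset.prod_const, Nat.card_Icc]
  simp; ring

lemma pifun_sign_odd (a : ℝ) (ha : a ∈ Set.Ioo (0:ℝ) 1) {n : ℕ} (hn : Odd n) :
    0 ≤ pifun a n := by
  rw [pifun_eq]
  have h1 : (-1 : ℝ) ^ (n - 1) = 1 := by
    apply Even.neg_one_pow
    obtain ⟨k, rfl⟩ := hn
    simp [Nat.add_sub_cancel]
  rw [h1, one_mul]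
  apply mul_nonneg ha.1.le
  apply Finset.prod_nonneg
  intro i hi
  have : (1:ℝ) ≤ (i:ℝ) := by exact_mod_cast (Finset.mem_Icc.mp hi).1
  linarith [ha.2]

lemma pifun_sign_even (a : ℝ) (ha : a ∈ Set.Ioo (0:ℝ) 1) {n : ℕ} (hn : Even n) (hn1 : 1 ≤ n) :
    pifun a n ≤ 0 := by
  rw [pifun_eq]
  have h1 : (-1 : ℝ) ^ (n - 1) = -1 := by
    apply Odd.neg_one_pow
    exact Nat.Even.sub_odd hn1 hn odd_one
  rw [h1]
  have : 0 ≤ a * ∏ i ∈ Finset.Icc 1 (n - 1), ((i : ℝ) - a) := by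
    apply mul_nonneg ha.1.le
    apply Finset.prod_nonneg
    intro i hi
    have : (1:ℝ) ≤ (i:ℝ) := by exact_mod_cast (Finset.mem_Icc.mp hi).1
    linarith [ha.2]
  linarith

lemma concaveOn_finset_sum {ι : Type*} {s : Set ℝ} (hs : Convex ℝ s)
    (F : Finset ι) (f : ι → ℝ → ℝ) (h : ∀ i ∈ F, ConcaveOn ℝ s (f i)) :
    ConcaveOn ℝ s (fun x => ∑ i ∈ F, f i x) := by
  classical
  induction F using Finset.induction_on with
  | empty => simpa using concaveOn_const (0:ℝ) hs
  | insert _ _ hx ih =>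
    rename_i i F
    simp only [Finset.sum_insert hx]
    exact ConcaveOn.add (h _ (Finset.mem_insert_self _ _))
      (ih fun j hj => h j (Finset.mem_insert_of_mem hj))

lemma concave_term (t : ℝ) (c : ℝ) (n : ℕ)
    (hodd : Odd n → 0 ≤ c) (heven : Even n → c ≤ 0) :
    ConcaveOn ℝ (Set.Icc (-t) (0:ℝ)) (fun x : ℝ => c * x ^ n) := by
  rcases Nat.even_or_odd n with hn | hn
  · -- even case: c ≤ 0
    have hc := heven hn
    have h1 : ConvexOn ℝ Set.univ (fun x : ℝ => (-c) • x ^ n) :=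
      ConvexOn.smul (c := -c) (by linarith) hn.convexOn_pow
    have h2 : ConcaveOn ℝ Set.univ (fun x : ℝ => -((-c) • x ^ n)) := h1.neg
    have h3 : (fun x : ℝ => -((-c) • x ^ n)) = fun x : ℝ => c * x ^ n := by
      funext x; simp [smul_eq_mul]
    rw [h3] at h2
    exact h2.subset (Set.subset_univ _) (convex_Icc _ _)
  · -- odd case: 0 ≤ c
    have hc := hodd hn
    have g : ℝ →ᵃ[ℝ] ℝ := -(AffineMap.id ℝ ℝ)
    have h1 : ConvexOn ℝ ((-(AffineMap.id ℝ ℝ) : ℝ →ᵃ[ℝ] ℝ) ⁻¹' (Set.Ici 0))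
        ((fun x : ℝ => x ^ n) ∘ (-(AffineMap.id ℝ ℝ) : ℝ →ᵃ[ℝ] ℝ)) :=
      (convexOn_pow n).comp_affineMap _
    have hpre : ((-(AffineMap.id ℝ ℝ) : ℝ →ᵃ[ℝ] ℝ) ⁻¹' (Set.Ici 0)) = Set.Iic 0 := by
      ext x; simp
    rw [hpre] at h1
    have h2 : ConcaveOn ℝ (Set.Iic 0) (fun x : ℝ => -(c • ((-x) ^ n))) := by
      have := (h1.smul hc).neg
      convert this using 2 <;> rfl
    have h3 : (fun x : ℝ => -(c • ((-x) ^ n))) = fun x : ℝ => c * x ^ n := by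
      funext x; rw [hn.neg_pow]; simp [smul_eq_mul]
    rw [h3] at h2
    exact h2.subset (fun x hx => hx.2) (convex_Icc _ _)

/-- for odd `p` the function `ζ ↦ μ(t,ζ)` is concave on `[−t,0]`. -/
theorem stmt8 (a : ℝ) (ha : a ∈ Set.Ioo (0 : ℝ) 1) (p : ℕ) (hpodd : Odd p)
    (t : ℝ) (ht : 0 < t) :
    ConcaveOn ℝ (Set.Icc (-t) (0 : ℝ)) (fun ζ => mufun a p t ζ) := by
  unfold mufun
  apply ConcaveOn.add (concaveOn_const _ (convex_Icc _ _))
  have h : ∀ ℓ ∈ Finset.Icc 1 p, ConcaveOn ℝ (Set.Icc (-t) (0:ℝ))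
      (fun ζ : ℝ => pifun a ℓ / (Nat.factorial ℓ : ℝ) * ζ ^ ℓ * t ^ (a - (ℓ : ℝ))) := by
    intro ℓ hℓ
    have hℓ1 : 1 ≤ ℓ := (Finset.mem_Icc.mp hℓ).1
    have heq : (fun ζ : ℝ => pifun a ℓ / (Nat.factorial ℓ : ℝ) * ζ ^ ℓ * t ^ (a - (ℓ : ℝ)))
        = fun ζ : ℝ => (pifun a ℓ / (Nat.factorial ℓ : ℝ) * t ^ (a - (ℓ : ℝ))) * ζ ^ ℓ := by
      funext ζ; ring
    rw [heq]
    apply concave_term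
    · intro ho
      have := pifun_sign_odd a ha ho
      positivity
    · intro he
      have h1 := pifun_sign_even a ha he hℓ1
      have h2 : (0:ℝ) < (Nat.factorial ℓ : ℝ) := by positivity
      have h3 : (0:ℝ) < t ^ (a - (ℓ : ℝ)) := Real.rpow_pos_of_pos ht _
      have : pifun a ℓ / (Nat.factorial ℓ : ℝ) ≤ 0 := div_nonpos_of_nonpos_of_nonneg h1 h2.le
      exact mul_nonpos_of_nonpos_of_nonneg this h3.le
  exact concaveOn_finset_sum (convex_Icc _ _) _ _ h
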